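/- For nonnegative integers m and n, s_{((2m)^n, 0^n)}(x_1,…,x_n,x_1^{-1},…,x_n^{-1}) = (-1)^{mn} · so^odd_{(m^n)}(x_1,…,x_n) · so^odd_{(m^n)}(-x_1,…,-x_n), where (a^n) denotes the partition with all n parts equal to a, and ((2m)^n, 0^n) is the partition with n parts equal to 2m followed by n zero parts. -/

import Mathlib

noncomputable section

/-- The field ℚ(y_1,…,y_n) of rational functions in the square-root variables
y_i = x_i^{1/2}, so that x_i = y_i². -/
abbrev K (n : ℕ) : Type := FractionRing (MvPolynomial (Fin n) ℚ)

/-- The square-root variable y_i = x_i^{1/2}. -/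
def Y {n : ℕ} (i : Fin n) : K n :=
  algebraMap (MvPolynomial (Fin n) ℚ) (K n) (MvPolynomial.X i)

/-- The variable x_i = y_i². -/
def Xv {n : ℕ} (i : Fin n) : K n := (Y i) ^ 2

/-- ∏_{i<j} (z_i + z_i⁻¹ - z_j - z_j⁻¹). -/
def xpairs {F : Type*} [Field F] {m : ℕ} (z : Fin m → F) : F :=
  ∏ i : Fin m, ∏ j : Fin m, if i < j then z i + (z i)⁻¹ - z j - (z j)⁻¹ else 1

/-- Bialternant Schur polynomial s_μ(z) = det(z_i^{μ_j+m-j}) / ∏_{i<j}(z_i - z_j). -/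
def schur {F : Type*} [Field F] (m : ℕ) (μ : Fin m → ℤ) (z : Fin m → F) : F :=
  (Matrix.of fun i j : Fin m => z i ^ (μ j + m - 1 - (j : ℕ))).det /
    ∏ i : Fin m, ∏ j : Fin m, if i < j then z i - z j else 1

/-- Odd orthogonal character so^odd, indexed by the doubled partition m = 2λ,
in the square-root variables y (x_i = y_i²). -/
def soOddD {F : Type*} [Field F] (n : ℕ) (m : Fin n → ℤ) (y : Fin n → F) : F :=
  (Matrix.of fun i j : Fin n =>
      y i ^ (m j + 2 * n - 2 * (j : ℕ) - 1) - y i ^ (-(m j + 2 * n - 2 * (j : ℕ) - 1))).det /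
    ((∏ i : Fin n, (y i - (y i)⁻¹)) * xpairs fun i => (y i) ^ 2)

/-- The odd orthogonal character so^odd_λ for a partition λ, written in its Laurent-polynomial
form so^odd_λ(z) = det(∑_{t=-(λ_j+n-j)}^{λ_j+n-j} z_i^t) / ∏_{i<j}(z_i + z_i⁻¹ - z_j - z_j⁻¹),
which can be evaluated at negated arguments. -/
def soOddL {F : Type*} [Field F] (n : ℕ) (lam : Fin n → ℤ) (z : Fin n → F) : F :=
  (Matrix.of fun i j : Fin n =>
      ∑ t ∈ Finset.Icc (-(lam j + n - 1 - (j : ℕ))) (lam j + n - 1 - (j : ℕ)), z i ^ t).det /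
    xpairs z


open Finset Matrix Equiv
section AllHelpers


section MyHelpers
variable {F : Type*} [Field F]

/-- det [[P,Q],[Q,P]] = det(P+Q) det(P-Q) -/
lemma det_blocks_PQQP {k : ℕ} (P Q : Matrix (Fin k) (Fin k) F) :
    (Matrix.fromBlocks P Q Q P).det = (P + Q).det * (P - Q).det := by
  have h : Matrix.fromBlocks (1 : Matrix (Fin k) (Fin k) F) 0 1 1 *
      Matrix.fromBlocks (P + Q) Q 0 (P - Q) *
      Matrix.fromBlocks (1 : Matrix (Fin k) (Fin k) F) 0 (-1) 1 =
      Matrix.fromBlocks P Q Q P := by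
    simp only [Matrix.fromBlocks_multiply]
    simp [Matrix.add_mul, Matrix.mul_add]
  rw [← h, Matrix.det_mul, Matrix.det_mul, Matrix.det_fromBlocks_zero₁₂,
    Matrix.det_fromBlocks_zero₂₁, Matrix.det_fromBlocks_zero₁₂]
  simp

lemma geom_sum_icc (w : F) (hw : w ≠ 0) (r : ℕ) :
    (∑ t ∈ Finset.Icc (-(r : ℤ)) (r : ℤ), w ^ t) * (w - 1) =
      w ^ ((r : ℤ) + 1) - w ^ (-(r : ℤ)) := by
  induction r with
  | zero => simp
  | succ r ih =>
      have hset : Finset.Icc (-((r+1 : ℕ) : ℤ)) ((r+1 : ℕ) : ℤ) =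
          insert (-((r+1 : ℕ) : ℤ)) (insert ((r+1 : ℕ) : ℤ) (Finset.Icc (-(r : ℤ)) (r : ℤ))) := by
        ext t; simp; omega
      rw [hset, Finset.sum_insert (by simp only [Finset.mem_insert, Finset.mem_Icc]; omega), Finset.sum_insert (by simp only [Finset.mem_Icc]; omega)]
      push_cast
      rw [add_mul, add_mul, ih]
      have e1 : w ^ (-((r : ℤ) + 1)) = w ^ (-(r:ℤ)) * w⁻¹ := by
        rw [neg_add, zpow_add₀ hw, _root_.zpow_neg_one]
      have e2 : w ^ ((r : ℤ) + 1) = w ^ (r:ℤ) * w := by rw [zpow_add₀ hw, zpow_one]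
      have e3 : w ^ ((r : ℤ) + 1 + 1) = w ^ (r:ℤ) * w * w := by
        rw [zpow_add₀ hw, zpow_add₀ hw, zpow_one]
      rw [e1, e2, e3]
      field_simp
      ring

end MyHelpers

section Helpers2
variable {F : Type*} [Field F]

lemma prod_split_diag {k : ℕ} (h : Fin k → Fin k → F) :
    (∏ i, ∏ j, h i j) =
      (∏ i, h i i) * ∏ i, ∏ j, if i < j then h i j * h j i else 1 := by
  have key : ∀ i j : Fin k, h i j =
      (if i = j then h i j else 1) * ((if i < j then h i j else 1) * (if j < i then h i j else 1)) := by
    intro i j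
    rcases lt_trichotomy i j with hh | hh | hh
    · simp [hh, hh.ne, not_lt_of_gt hh]
    · simp [hh, lt_irrefl]
    · simp [hh, hh.ne', not_lt_of_gt hh]
  calc (∏ i, ∏ j, h i j)
      = ∏ i, ∏ j, (if i = j then h i j else 1) *
          ((if i < j then h i j else 1) * (if j < i then h i j else 1)) := by
        simp_rw [← key]
    _ = (∏ i, h i i) * ((∏ i, ∏ j, if i < j then h i j else 1) *
          (∏ i, ∏ j, if j < i then h i j else 1)) := by
        simp_rw [Finset.prod_mul_distrib]
        congr 1
        · exact Finset.prod_congr rfl fun i _ => by rw [Finset.prod_ite_eq univ i (h i)]; simp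
    _ = (∏ i, h i i) * ∏ i, ∏ j, if i < j then h i j * h j i else 1 := by
        congr 1
        have hc : (∏ i : Fin k, ∏ j : Fin k, if j < i then h i j else 1)
            = ∏ j : Fin k, ∏ i : Fin k, if j < i then h i j else 1 := Finset.prod_comm
        rw [hc, ← Finset.prod_mul_distrib]
        refine Finset.prod_congr rfl fun i _ => ?_
        rw [← Finset.prod_mul_distrib]
        refine Finset.prod_congr rfl fun j _ => ?_
        split <;> simp

lemma sign_revPerm_int (k : ℕ) :
    (Equiv.Perm.sign (Fin.revPerm : Equiv.Perm (Fin k)) : ℤ) =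
      (-1) ^ (∑ i : Fin k, (Finset.Ioi i).card) := by
  have hv : ∀ i j : Fin k, i < j → ((j : ℚ) - (i : ℚ)) ≠ 0 := by
    intro i j hij
    have : (i : ℚ) < (j : ℚ) := by exact_mod_cast hij
    linarith
  set v : Fin k → ℚ := fun i => (i : ℚ) with hvdef
  have hD : (Matrix.vandermonde v).det = ∏ i : Fin k, ∏ j ∈ Finset.Ioi i, (v j - v i) :=
    Matrix.det_vandermonde v
  have hDne : (Matrix.vandermonde v).det ≠ 0 := by
    rw [hD]
    refine Finset.prod_ne_zero_iff.mpr fun i _ => Finset.prod_ne_zero_iff.mpr fun j hj => ?_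
    exact hv i j (Finset.mem_Ioi.mp hj)
  have h2 : (Matrix.vandermonde v).submatrix Fin.revPerm id = Matrix.vandermonde (v ∘ Fin.rev) := by
    ext i j; simp [Matrix.vandermonde_apply]
  have h1 : ((Matrix.vandermonde v).submatrix Fin.revPerm id).det =
      (Equiv.Perm.sign (Fin.revPerm : Equiv.Perm (Fin k)) : ℤ) * (Matrix.vandermonde v).det := by
    rw [Matrix.det_permute]
  have h3 : (Matrix.vandermonde (v ∘ Fin.rev)).det =
      (-1 : ℚ) ^ (∑ i : Fin k, (Finset.Ioi i).card) * (Matrix.vandermonde v).det := by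
    rw [Matrix.det_vandermonde, hD]
    rw [← Finset.prod_pow_eq_pow_sum, ← Finset.prod_mul_distrib]
    refine Finset.prod_congr rfl fun i _ => ?_
    rw [← Finset.prod_const, ← Finset.prod_mul_distrib]
    refine Finset.prod_congr rfl fun j hj => ?_
    have hij : i < j := Finset.mem_Ioi.mp hj
    have hji : (j : ℕ) < k := j.isLt
    have hii : (i : ℕ) < k := i.isLt
    have hrev : ∀ l : Fin k, (v ∘ Fin.rev) l = (k : ℚ) - 1 - (l : ℚ) := by
      intro l
      simp only [Function.comp_apply, hvdef, Fin.val_rev]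
      have hl : (l : ℕ) + 1 ≤ k := l.isLt
      push_cast [Nat.cast_sub hl]
      ring
    rw [hrev, hrev]
    ring
  have := h1.symm.trans (h2 ▸ h3)
  have hq : ((Equiv.Perm.sign (Fin.revPerm : Equiv.Perm (Fin k)) : ℤ) : ℚ) =
      ((-1 : ℤ) ^ (∑ i : Fin k, (Finset.Ioi i).card) : ℤ) := by
    push_cast
    exact mul_right_cancel₀ hDne (by rw [← this])
  exact_mod_cast hq

end Helpers2

section NZ
variable {n : ℕ}

lemma algK_ne {p q : MvPolynomial (Fin n) ℚ} (v : Fin n → ℚ)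
    (h : MvPolynomial.eval v p ≠ MvPolynomial.eval v q) :
    algebraMap (MvPolynomial (Fin n) ℚ) (K n) p ≠ algebraMap (MvPolynomial (Fin n) ℚ) (K n) q :=
  fun he => h (congrArg (MvPolynomial.eval v)
    (IsFractionRing.injective (MvPolynomial (Fin n) ℚ) (K n) he))

lemma Y_ne_zero (i : Fin n) : Y i ≠ 0 := by
  have := algK_ne (p := MvPolynomial.X i) (q := 0) (fun _ => 1) (by simp)
  simpa [Y] using this

lemma Xv_ne_zero (i : Fin n) : Xv i ≠ 0 := pow_ne_zero 2 (Y_ne_zero i)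

lemma Ysq_ne_one (i : Fin n) : (Y i) ^ 2 ≠ 1 := by
  have := algK_ne (p := MvPolynomial.X i ^ 2) (q := 1) (fun _ => 0) (by simp)
  simpa [Y, map_pow] using this

lemma Ysq_ne_negone (i : Fin n) : (Y i) ^ 2 ≠ -1 := by
  have := algK_ne (p := MvPolynomial.X i ^ 2) (q := -1) (fun _ => 0) (by simp)
  simpa [Y, map_pow] using this

lemma Y_sub_inv_ne (i : Fin n) : Y i - (Y i)⁻¹ ≠ 0 := by
  intro h
  apply Ysq_ne_one i
  have hy := Y_ne_zero i
  field_simp at h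
  rw [sq]; linear_combination h

lemma Y_add_inv_ne (i : Fin n) : Y i + (Y i)⁻¹ ≠ 0 := by
  intro h
  apply Ysq_ne_negone i
  have hy := Y_ne_zero i
  field_simp at h
  rw [sq]; linear_combination h

lemma Xv_sub_ne {i j : Fin n} (hij : i ≠ j) : Xv i - Xv j ≠ 0 := by
  have := algK_ne (p := MvPolynomial.X i ^ 2) (q := MvPolynomial.X j ^ 2)
    (fun k => if k = i then 1 else 0) (by simp [hij, Ne.symm hij])
  intro h
  apply this
  have : Xv i = Xv j := by linear_combination h
  simpa [Xv, Y, map_pow] using this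

lemma Xv_mul_ne_one {i j : Fin n} : Xv i * Xv j - 1 ≠ 0 := by
  have := algK_ne (p := MvPolynomial.X i ^ 2 * MvPolynomial.X j ^ 2) (q := 1)
    (fun _ => 0) (by simp)
  intro h
  apply this
  have h2 : Xv i * Xv j = 1 := by linear_combination h
  simpa [Xv, Y, map_pow, _root_.map_mul] using h2

lemma u_sub_ne {i j : Fin n} (hij : i ≠ j) :
    Xv i + (Xv i)⁻¹ - Xv j - (Xv j)⁻¹ ≠ 0 := by
  have hxi := Xv_ne_zero i
  have hxj := Xv_ne_zero j
  have key : (Xv i + (Xv i)⁻¹ - Xv j - (Xv j)⁻¹) * (Xv i * Xv j) =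
      (Xv i - Xv j) * (Xv i * Xv j - 1) := by field_simp; ring
  intro h
  rw [h, zero_mul] at key
  rcases mul_eq_zero.mp key.symm with h1 | h1
  · exact Xv_sub_ne hij h1
  · exact Xv_mul_ne_one h1

end NZ

section Num
variable (m n : ℕ)

lemma mm_aux (n : ℕ) (i : Fin (2*n)) (h : ¬ (i:ℕ) < n) : (i:ℕ) - n < n := by
  have := i.isLt; omega

def Emap (n : ℕ) : (Fin n ⊕ Fin n) ≃ Fin (2*n) := finSumFinEquiv.trans (finCongr (two_mul n).symm)

lemma Emap_inl {n : ℕ} (i : Fin n) : ((Emap n (Sum.inl i) : Fin (2*n)) : ℕ) = (i : ℕ) := by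
  simp [Emap]
lemma Emap_inr {n : ℕ} (i : Fin n) : ((Emap n (Sum.inr i) : Fin (2*n)) : ℕ) = n + (i : ℕ) := by
  simp [Emap]; omega

def Amat (m n : ℕ) : Matrix (Fin n) (Fin n) (K n) := Matrix.of fun i j =>
  Y i ^ (2*(m:ℤ) + 2*n - 2*(j:ℕ) - 1) - Y i ^ (-(2*(m:ℤ) + 2*n - 2*(j:ℕ) - 1))
def Cmat (m n : ℕ) : Matrix (Fin n) (Fin n) (K n) := Matrix.of fun i j =>
  Y i ^ (2*(m:ℤ) + 2*n - 2*(j:ℕ) - 1) + Y i ^ (-(2*(m:ℤ) + 2*n - 2*(j:ℕ) - 1))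
def Bmat (m n : ℕ) : Matrix (Fin n) (Fin n) (K n) := Matrix.of fun i j =>
  ∑ t ∈ Finset.Icc (-((m:ℤ) + n - 1 - (j:ℕ))) ((m:ℤ) + n - 1 - (j:ℕ)), (-Xv i) ^ t
def Mmat (m n : ℕ) : Matrix (Fin (2*n)) (Fin (2*n)) (K n) := Matrix.of fun i j =>
  (if h : (i:ℕ) < n then Xv ⟨(i:ℕ), h⟩ else (Xv ⟨(i:ℕ) - n, mm_aux n i h⟩)⁻¹) ^
    ((if (j:ℕ) < n then (2*(m:ℤ)) else 0) + ((2*n : ℕ) : ℤ) - 1 - ((j:ℕ) : ℤ))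
def Pmat (m n : ℕ) : Matrix (Fin n) (Fin n) (K n) := Matrix.of fun i j =>
  Y i ^ ((2*(m:ℤ) + 2*n - 1) + (2*(m:ℤ) + 2*n - 2*(j:ℕ) - 1))
def Qmat (m n : ℕ) : Matrix (Fin n) (Fin n) (K n) := Matrix.of fun i j =>
  Y i ^ ((2*(m:ℤ) + 2*n - 1) - (2*(m:ℤ) + 2*n - 2*(j:ℕ) - 1))

/-- the scaled, reindexed big matrix is a block matrix -/
lemma step_blocks :
    (Matrix.of fun (s t : Fin n ⊕ Fin n) =>
        (Sum.elim (fun _ : Fin n => (1 : K n)) (fun i : Fin n => Xv i ^ ((2*(m:ℤ) + 2*n - 1))) s) *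
        (Mmat m n).submatrix (⇑(Emap n))
          (⇑(Emap n) ∘ ⇑(Equiv.sumCongr (Equiv.refl (Fin n)) Fin.revPerm)) s t)
    = Matrix.fromBlocks (Pmat m n) (Qmat m n) (Qmat m n) (Pmat m n) := by
  have hxy : ∀ (i : Fin n) (e : ℤ), (Xv i) ^ e = Y i ^ (2 * e) := by
    intro i e
    rw [Xv, ← zpow_natCast (Y i) 2, ← _root_.zpow_mul]
    norm_num
  ext s t
  rcases s with i | i <;> rcases t with j | j <;>
    simp only [Matrix.of_apply, Matrix.submatrix_apply, Function.comp_apply,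
      Equiv.sumCongr_apply, Sum.elim_inl, Sum.elim_inr, Sum.map_inl, Sum.map_inr,
      Equiv.refl_apply, Fin.revPerm_apply, Mmat, Matrix.fromBlocks_apply₁₁,
      Matrix.fromBlocks_apply₁₂, Matrix.fromBlocks_apply₂₁, Matrix.fromBlocks_apply₂₂,
      Pmat, Qmat, one_mul]
  · -- (inl i, inl j) : P
    have hi := Emap_inl i
    have hj := Emap_inl j
    have hiv : ((Emap n (Sum.inl i) : Fin (2*n)) : ℕ) < n := by rw [hi]; exact i.isLt
    have hjl : ((Emap n (Sum.inl j) : Fin (2*n)) : ℕ) < n := by rw [hj]; exact j.isLt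
    rw [dif_pos hiv]; simp only [hjl, ↓reduceIte]
    have : (⟨((Emap n (Sum.inl i) : Fin (2*n)) : ℕ), hiv⟩ : Fin n) = i := by
      apply Fin.ext; rw [hi]
    rw [this, hxy]
    congr 1
    push_cast [hj]
    ring
  · -- (inl i, inr (rev j)) : Q
    have hi := Emap_inl i
    have hj := Emap_inr (Fin.rev j)
    have hiv : ((Emap n (Sum.inl i) : Fin (2*n)) : ℕ) < n := by rw [hi]; exact i.isLt
    have hjv : ¬ ((Emap n (Sum.inr (Fin.rev j)) : Fin (2*n)) : ℕ) < n := by rw [hj]; omega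
    rw [dif_pos hiv, if_neg hjv]
    have : (⟨((Emap n (Sum.inl i) : Fin (2*n)) : ℕ), hiv⟩ : Fin n) = i := by
      apply Fin.ext; rw [hi]
    rw [this, hxy]
    congr 1
    have hrv : ((Fin.rev j : Fin n) : ℕ) = n - (j + 1) := Fin.val_rev j
    have hjn : (j : ℕ) < n := j.isLt
    rw [hj, hrv]
    push_cast [Nat.cast_sub (show (j:ℕ)+1 ≤ n from hjn)]
    ring
  · -- (inr i, inl j) : Q
    have hi := Emap_inr i
    have hj := Emap_inl j
    have hiv : ¬ ((Emap n (Sum.inr i) : Fin (2*n)) : ℕ) < n := by rw [hi]; omega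
    have hjl : ((Emap n (Sum.inl j) : Fin (2*n)) : ℕ) < n := by rw [hj]; exact j.isLt
    rw [dif_neg hiv]; simp only [hjl, ↓reduceIte]
    have hix : (⟨((Emap n (Sum.inr i) : Fin (2*n)) : ℕ) - n, by
        have := (Emap n (Sum.inr i)).isLt; omega⟩ : Fin n) = i := by
      apply Fin.ext; simp [hi]
    rw [hix, _root_.inv_zpow, ← _root_.zpow_neg, hxy, hxy, ← zpow_add₀ (Y_ne_zero i)]
    congr 1
    rw [hj]
    push_cast
    ring
  · -- (inr i, inr (rev j)) : P
    have hi := Emap_inr i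
    have hj := Emap_inr (Fin.rev j)
    have hiv : ¬ ((Emap n (Sum.inr i) : Fin (2*n)) : ℕ) < n := by rw [hi]; omega
    have hjv : ¬ ((Emap n (Sum.inr (Fin.rev j)) : Fin (2*n)) : ℕ) < n := by rw [hj]; omega
    rw [dif_neg hiv, if_neg hjv]
    have hix : (⟨((Emap n (Sum.inr i) : Fin (2*n)) : ℕ) - n, by
        have := (Emap n (Sum.inr i)).isLt; omega⟩ : Fin n) = i := by
      apply Fin.ext; simp [hi]
    rw [hix, _root_.inv_zpow, ← _root_.zpow_neg, hxy, hxy, ← zpow_add₀ (Y_ne_zero i)]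
    congr 1
    have hrv : ((Fin.rev j : Fin n) : ℕ) = n - (j + 1) := Fin.val_rev j
    have hjn : (j : ℕ) < n := j.isLt
    rw [hj, hrv]
    push_cast [Nat.cast_sub (show (j:ℕ)+1 ≤ n from hjn)]
    ring

end Num

section Num2
variable (m n : ℕ)

lemma entry_B (i j : Fin n) :
    (-(Xv i + 1)) * Bmat m n i j =
      (-1 : K n) ^ (m + n - (j:ℕ)) * (Y i * Cmat m n i j) := by
  have hxy : ∀ (i : Fin n) (e : ℤ), (Xv i) ^ e = Y i ^ (2 * e) := by
    intro i e
    rw [Xv, ← zpow_natCast (Y i) 2, ← _root_.zpow_mul]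
    norm_num
  have hy := Y_ne_zero i
  have hjn : (j:ℕ) < n := j.isLt
  set r : ℕ := m + n - 1 - (j:ℕ) with hr
  have hrz : ((m:ℤ) + n - 1 - (j:ℕ)) = (r:ℤ) := by push_cast; omega
  have hw : (-Xv i) ≠ 0 := neg_ne_zero.mpr (Xv_ne_zero i)
  have hB : Bmat m n i j = ∑ t ∈ Finset.Icc (-(r:ℤ)) (r:ℤ), (-Xv i) ^ t := by
    rw [Bmat]; rw [Matrix.of_apply, hrz]
  have hgeom := geom_sum_icc (-Xv i) hw r
  have hL : (-(Xv i + 1)) * Bmat m n i j =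
      (-Xv i) ^ ((r:ℤ)+1) - (-Xv i) ^ (-(r:ℤ)) := by
    rw [hB, ← hgeom]; ring
  rw [hL]
  have hneg : (-Xv i) = (-1) * Xv i := by ring
  have hz1 : (-1:K n) ^ ((r:ℤ)+1) = (-1:K n)^(r+1) := by
    rw [show ((r:ℤ)+1) = ((r+1 : ℕ) : ℤ) by push_cast; ring, zpow_natCast]
  have hz2 : (-1:K n) ^ (-(r:ℤ)) = (-1:K n)^r := by
    rw [_root_.zpow_neg, ← _root_.inv_zpow, inv_neg, inv_one, zpow_natCast]
  have e1 : (-Xv i) ^ ((r:ℤ)+1) = (-1:K n)^(r+1) * Y i ^ (2*(r:ℤ)+2) := by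
    rw [hneg, mul_zpow, hxy, hz1, show (2*((r:ℤ)+1)) = 2*(r:ℤ)+2 from by ring]
  have e2 : (-Xv i) ^ (-(r:ℤ)) = (-1:K n)^r * Y i ^ (-(2*(r:ℤ))) := by
    rw [hneg, mul_zpow, hxy, hz2, show (2*(-(r:ℤ))) = -(2*(r:ℤ)) from by ring]
  rw [e1, e2]
  have hb : (2*(m:ℤ) + 2*n - 2*(j:ℕ) - 1) = 2*(r:ℤ) + 1 := by push_cast; omega
  have hCe : Cmat m n i j = Y i ^ (2*(r:ℤ)+1) + Y i ^ (-(2*(r:ℤ)+1)) := by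
    rw [Cmat, Matrix.of_apply, hb]
  have hmn : m + n - (j:ℕ) = r + 1 := by omega
  rw [hCe, hmn]
  have f1 : Y i ^ (2*(r:ℤ)+2) = Y i ^ (2*(r:ℤ)+1) * Y i := by
    rw [show (2*(r:ℤ)+2) = (2*(r:ℤ)+1)+1 from by ring, zpow_add_one₀ hy]
  have f2 : Y i ^ (-(2*(r:ℤ))) = Y i ^ (-(2*(r:ℤ)+1)) * Y i := by
    rw [show (-(2*(r:ℤ))) = (-(2*(r:ℤ)+1))+1 from by ring, zpow_add_one₀ hy]
  rw [f1, f2, pow_succ]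
  ring

lemma prod_negX (n : ℕ) : (∏ i : Fin n, -(Xv i + 1)) =
    (∏ i : Fin n, Y i) * ∏ i : Fin n, -(Y i + (Y i)⁻¹) := by
  rw [← Finset.prod_mul_distrib]
  refine Finset.prod_congr rfl fun i _ => ?_
  have hy : Y i * (Y i)⁻¹ = 1 := mul_inv_cancel₀ (Y_ne_zero i)
  rw [Xv]
  linear_combination hy

lemma prod_pow_neg_one (m n : ℕ) : (∏ j : Fin n, (-1 : K n) ^ (m + n - (j:ℕ)))
    = (-1 : K n) ^ (n*(m+1) + ∑ i : Fin n, (Finset.Ioi i).card) := by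
  rw [Finset.prod_pow_eq_pow_sum]
  congr 1
  have : ∀ j : Fin n, m + n - (j:ℕ) = (m+1) + (Finset.Ioi j).card := by
    intro j
    rw [Fin.card_Ioi]
    have := j.isLt
    omega
  rw [Finset.sum_congr rfl fun j _ => this j, Finset.sum_add_distrib,
    Finset.sum_const, Finset.card_univ, Fintype.card_fin, smul_eq_mul]

lemma prod_XT (m n : ℕ) : (∏ i : Fin n, Xv i ^ (2*(m:ℤ) + 2*n - 1)) =
    (∏ i : Fin n, Y i ^ (2*(m:ℤ) + 2*n - 1)) * (∏ i : Fin n, Y i ^ (2*(m:ℤ) + 2*n - 1)) := by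
  rw [← Finset.prod_mul_distrib]
  refine Finset.prod_congr rfl fun i _ => ?_
  rw [Xv, ← zpow_natCast (Y i) 2, ← _root_.zpow_mul,
    show ((2:ℕ):ℤ) * (2*(m:ℤ) + 2*n - 1) = (2*(m:ℤ)+2*n-1) + (2*(m:ℤ)+2*n-1) from by push_cast; ring,
    zpow_add₀ (Y_ne_zero i)]

lemma sgn_rev_K (n : ℕ) : ((Equiv.Perm.sign (Fin.revPerm : Equiv.Perm (Fin n)) : ℤ) : K n)
    = (-1 : K n) ^ (∑ i : Fin n, (Finset.Ioi i).card) := by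
  rw [sign_revPerm_int]
  push_cast
  ring

set_option maxHeartbeats 1000000 in
lemma C_fact (m n : ℕ) : (Cmat m n).det =
    (-1 : K n) ^ (n*(m+1) + ∑ i : Fin n, (Finset.Ioi i).card)
      * (∏ i : Fin n, -(Y i + (Y i)⁻¹)) * (Bmat m n).det := by
  classical
  set S : ℕ := ∑ i : Fin n, (Finset.Ioi i).card with hS
  set YC : Matrix (Fin n) (Fin n) (K n) := Matrix.of fun (i j : Fin n) => Y i * Cmat m n i j with hYC
  have hMB : (Matrix.of fun (i j : Fin n) => (-(Xv i + 1)) * Bmat m n i j)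
      = Matrix.of fun (i j : Fin n) => (-1 : K n) ^ (m + n - (j:ℕ)) * YC i j := by
    ext i j
    simp only [Matrix.of_apply, hYC]
    exact entry_B m n i j
  have d1 : (Matrix.of fun (i j : Fin n) => (-(Xv i + 1)) * Bmat m n i j).det
      = (∏ i : Fin n, -(Xv i + 1)) * (Bmat m n).det := Matrix.det_mul_column _ _
  have d2 : (Matrix.of fun (i j : Fin n) => (-1 : K n) ^ (m + n - (j:ℕ)) * YC i j).det
      = (∏ j : Fin n, (-1 : K n) ^ (m + n - (j:ℕ))) * ((∏ i : Fin n, Y i) * (Cmat m n).det) := by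
    rw [Matrix.det_mul_row]
    congr 1
    rw [hYC, Matrix.det_mul_column]
  have key : (∏ i : Fin n, -(Xv i + 1)) * (Bmat m n).det
      = (∏ j : Fin n, (-1 : K n) ^ (m + n - (j:ℕ))) * ((∏ i : Fin n, Y i) * (Cmat m n).det) := by
    rw [← d1, ← d2, hMB]
  rw [prod_negX, prod_pow_neg_one, ← hS] at key
  have hYne : (∏ i : Fin n, Y i) ≠ 0 := Finset.prod_ne_zero_iff.mpr fun i _ => Y_ne_zero i
  have hsq : (-1 : K n) ^ (n*(m+1) + S) * (-1 : K n) ^ (n*(m+1) + S) = 1 := by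
    rw [← pow_add, neg_one_pow_eq_pow_mod_two]
    have h0 : (n*(m+1) + S + (n*(m+1) + S)) % 2 = 0 := by omega
    rw [h0, pow_zero]
  apply mul_left_cancel₀ hYne
  apply mul_left_cancel₀ (a := (-1 : K n) ^ (n*(m+1) + S))
    (pow_ne_zero _ (neg_ne_zero.mpr one_ne_zero))
  linear_combination (-1 : K n)*key
    - (∏ i : Fin n, Y i) * (∏ i : Fin n, -(Y i + (Y i)⁻¹)) * (Bmat m n).det * hsq

set_option maxHeartbeats 1600000 in
lemma numer_fact (m n : ℕ) :
    (Mmat m n).det = (-1 : K n)^(m*n) * (∏ i : Fin n, (Y i + (Y i)⁻¹))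
      * (Amat m n).det * (Bmat m n).det := by
  classical
  set S : ℕ := ∑ i : Fin n, (Finset.Ioi i).card with hS
  set T : ℤ := 2*(m:ℤ) + 2*n - 1 with hT
  set σ : Equiv.Perm (Fin n ⊕ Fin n) := Equiv.sumCongr (Equiv.refl (Fin n)) Fin.revPerm with hσ
  set N' : Matrix (Fin n ⊕ Fin n) (Fin n ⊕ Fin n) (K n) :=
    (Mmat m n).submatrix (⇑(Emap n)) (⇑(Emap n) ∘ ⇑σ) with hN'
  set sgn : K n := ((Equiv.Perm.sign (Fin.revPerm : Equiv.Perm (Fin n)) : ℤ) : K n) with hsgn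
  have h1 : N'.det = sgn * (Mmat m n).det := by
    have hcomp : N' = ((Mmat m n).submatrix (⇑(Emap n)) (⇑(Emap n))).submatrix id ⇑σ := by
      rw [Matrix.submatrix_submatrix]; rfl
    rw [hcomp, Matrix.det_permute', Matrix.det_submatrix_equiv_self, hσ,
      Equiv.Perm.sign_sumCongr]
    simp [hsgn]
  have h2 : (Matrix.of fun (s t : Fin n ⊕ Fin n) =>
      (Sum.elim (fun _ : Fin n => (1 : K n)) (fun i : Fin n => Xv i ^ T) s) * N' s t).det
      = (∏ i : Fin n, Xv i ^ T) * N'.det := by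
    rw [Matrix.det_mul_column]
    congr 1
    rw [Fintype.prod_sum_type]
    simp
  have h3 : (Matrix.of fun (s t : Fin n ⊕ Fin n) =>
      (Sum.elim (fun _ : Fin n => (1 : K n)) (fun i : Fin n => Xv i ^ T) s) * N' s t).det
      = ((Pmat m n) + (Qmat m n)).det * ((Pmat m n) - (Qmat m n)).det := by
    rw [show (Matrix.of fun (s t : Fin n ⊕ Fin n) =>
      (Sum.elim (fun _ : Fin n => (1 : K n)) (fun i : Fin n => Xv i ^ T) s) * N' s t)
      = Matrix.fromBlocks (Pmat m n) (Qmat m n) (Qmat m n) (Pmat m n) from step_blocks m n]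
    exact det_blocks_PQQP _ _
  have h4 : ((Pmat m n) + (Qmat m n)).det = (∏ i : Fin n, Y i ^ T) * (Cmat m n).det := by
    have he : (Pmat m n) + (Qmat m n) = Matrix.of fun (i j : Fin n) => Y i ^ T * (Cmat m n) i j := by
      ext i j
      simp only [Matrix.add_apply, Pmat, Qmat, Cmat, Matrix.of_apply]
      rw [zpow_add₀ (Y_ne_zero i), show (T - (2*(m:ℤ) + 2*n - 2*(j:ℕ) - 1))
        = T + (-(2*(m:ℤ) + 2*n - 2*(j:ℕ) - 1)) from by ring, zpow_add₀ (Y_ne_zero i)]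
      ring
    rw [he, Matrix.det_mul_column]
  have h5 : ((Pmat m n) - (Qmat m n)).det = (∏ i : Fin n, Y i ^ T) * (Amat m n).det := by
    have he : (Pmat m n) - (Qmat m n) = Matrix.of fun (i j : Fin n) => Y i ^ T * (Amat m n) i j := by
      ext i j
      simp only [Matrix.sub_apply, Pmat, Qmat, Amat, Matrix.of_apply]
      rw [zpow_add₀ (Y_ne_zero i), show (T - (2*(m:ℤ) + 2*n - 2*(j:ℕ) - 1))
        = T + (-(2*(m:ℤ) + 2*n - 2*(j:ℕ) - 1)) from by ring, zpow_add₀ (Y_ne_zero i)]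
      ring
    rw [he, Matrix.det_mul_column]
  have hYT : (∏ i : Fin n, Y i ^ T) ≠ 0 :=
    Finset.prod_ne_zero_iff.mpr fun i _ => zpow_ne_zero _ (Y_ne_zero i)
  have h7 : N'.det = (Cmat m n).det * (Amat m n).det := by
    have hkey := h2.symm.trans h3
    rw [h4, h5, hT, prod_XT m n, ← hT] at hkey
    exact mul_left_cancel₀ (mul_ne_zero hYT hYT) (by linear_combination hkey)
  have hsgn2 : sgn * sgn = 1 := by
    rw [hsgn, ← Int.cast_mul, ← Int.cast_one]
    congr 1
    rw [← Units.val_mul, Int.units_mul_self]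
    rfl
  have h8 : (Mmat m n).det = sgn * ((Cmat m n).det * (Amat m n).det) := by
    rw [← h7, h1, ← mul_assoc, hsgn2, one_mul]
  have h9 : (∏ i : Fin n, -(Y i + (Y i)⁻¹)) = (-1 : K n)^n * ∏ i : Fin n, (Y i + (Y i)⁻¹) := by
    have he : (∏ i : Fin n, -(Y i + (Y i)⁻¹)) = ∏ i : Fin n, ((-1) * (Y i + (Y i)⁻¹)) := by
      refine Finset.prod_congr rfl fun i _ => by ring
    rw [he, Finset.prod_mul_distrib, Finset.prod_const, Finset.card_univ, Fintype.card_fin]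
  have hpow : (-1 : K n)^S * ((-1 : K n)^(n*(m+1)+S) * (-1 : K n)^n) = (-1 : K n)^(m*n) := by
    rw [← pow_add, ← pow_add]
    have he : S + (n*(m+1) + S + n) = m*n + 2*(S+n) := by ring
    rw [he, pow_add, pow_mul (-1 : K n) 2, neg_one_sq, one_pow, mul_one]
  rw [h8, hsgn, sgn_rev_K, ← hS, C_fact m n, ← hS, h9]
  linear_combination ((Amat m n).det * (Bmat m n).det * (∏ i : Fin n, (Y i + (Y i)⁻¹))) * hpow

end Num2

lemma pair_identity {F : Type*} [Field F] (a b : F) (ha : a ≠ 0) (hb : b ≠ 0) :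
    (a - b) * ((a⁻¹ - b⁻¹) * ((a - b⁻¹) * (b - a⁻¹))) =
      (a + a⁻¹ - b - b⁻¹) * (-a + (-a)⁻¹ - (-b) - (-b)⁻¹) := by
  rw [inv_neg, inv_neg]
  field_simp
  ring

lemma diag_identity {F : Type*} [Field F] (y : F) (hy : y ≠ 0) :
    y^2 - (y^2)⁻¹ = (y - y⁻¹) * (y + y⁻¹) := by
  rw [sq, mul_inv]
  ring

set_option maxHeartbeats 1600000 in
lemma denom_fact (n : ℕ) :
    (∏ i : Fin (2*n), ∏ j : Fin (2*n),
        if i < j then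
          (if h : (i:ℕ) < n then Xv ⟨(i:ℕ), h⟩ else (Xv ⟨(i:ℕ)-n, mm_aux n i h⟩)⁻¹) -
          (if h : (j:ℕ) < n then Xv ⟨(j:ℕ), h⟩ else (Xv ⟨(j:ℕ)-n, mm_aux n j h⟩)⁻¹)
        else 1)
    = (∏ i : Fin n, (Y i - (Y i)⁻¹)) * (∏ i : Fin n, (Y i + (Y i)⁻¹))
      * xpairs (fun i : Fin n => Y i ^ 2) * xpairs (fun i : Fin n => -(Xv i)) := by
  classical
  set z : Fin (2*n) → K n := fun i =>
    if h : (i:ℕ) < n then Xv ⟨(i:ℕ), h⟩ else (Xv ⟨(i:ℕ)-n, mm_aux n i h⟩)⁻¹ with hz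
  set f : Fin (2*n) → Fin (2*n) → K n := fun i j => if i < j then z i - z j else 1 with hf
  have hzl : ∀ i : Fin n, z (Emap n (Sum.inl i)) = Xv i := by
    intro i
    simp only [hz]
    have hv : ((Emap n (Sum.inl i) : Fin (2*n)) : ℕ) < n := by rw [Emap_inl]; exact i.isLt
    rw [dif_pos hv]
    exact congrArg Xv (Fin.ext (Emap_inl i))
  have hzr : ∀ i : Fin n, z (Emap n (Sum.inr i)) = (Xv i)⁻¹ := by
    intro i
    simp only [hz]
    have hv : ¬ ((Emap n (Sum.inr i) : Fin (2*n)) : ℕ) < n := by rw [Emap_inr]; omega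
    rw [dif_neg hv]
    congr 2
    apply Fin.ext
    simp [Emap_inr]
  -- split the double product over the sum type
  have h0 : (∏ i : Fin (2*n), ∏ j : Fin (2*n), f i j)
      = ∏ s : Fin n ⊕ Fin n, ∏ t : Fin n ⊕ Fin n, f (Emap n s) (Emap n t) := by
    rw [← (Emap n).prod_comp (fun i => ∏ j : Fin (2*n), f i j)]
    exact Finset.prod_congr rfl fun s _ =>
      ((Emap n).prod_comp (fun j => f (Emap n s) j)).symm
  rw [h0]
  rw [Fintype.prod_sum_type]
  simp_rw [Fintype.prod_sum_type]
  rw [Finset.prod_mul_distrib, Finset.prod_mul_distrib]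
  -- evaluate the four blocks
  have hll : (∏ i : Fin n, ∏ j : Fin n, f (Emap n (Sum.inl i)) (Emap n (Sum.inl j)))
      = ∏ i : Fin n, ∏ j : Fin n, if i < j then Xv i - Xv j else 1 := by
    refine Finset.prod_congr rfl fun i _ => Finset.prod_congr rfl fun j _ => ?_
    simp only [hf]
    have hc : (Emap n (Sum.inl i) < Emap n (Sum.inl j)) ↔ i < j := by
      simp only [Fin.lt_def, Emap_inl]
    rw [hzl, hzl]
    simp only [hc]
  have hlr : (∏ i : Fin n, ∏ j : Fin n, f (Emap n (Sum.inl i)) (Emap n (Sum.inr j)))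
      = ∏ i : Fin n, ∏ j : Fin n, (Xv i - (Xv j)⁻¹) := by
    refine Finset.prod_congr rfl fun i _ => Finset.prod_congr rfl fun j _ => ?_
    simp only [hf]
    have hc : (Emap n (Sum.inl i) < Emap n (Sum.inr j)) := by
      simp only [Fin.lt_def, Emap_inl, Emap_inr]
      have := i.isLt
      omega
    rw [if_pos hc, hzl, hzr]
  have hrl : (∏ i : Fin n, ∏ j : Fin n, f (Emap n (Sum.inr i)) (Emap n (Sum.inl j)))
      = 1 := by
    rw [← Finset.prod_const_one (s := (univ : Finset (Fin n)))]
    refine Finset.prod_congr rfl fun i _ => ?_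
    rw [← Finset.prod_const_one (s := (univ : Finset (Fin n)))]
    refine Finset.prod_congr rfl fun j _ => ?_
    simp only [hf]
    have hc : ¬ (Emap n (Sum.inr i) < Emap n (Sum.inl j)) := by
      simp only [Fin.lt_def, Emap_inr, Emap_inl]
      have := j.isLt
      omega
    rw [if_neg hc]
  have hrr : (∏ i : Fin n, ∏ j : Fin n, f (Emap n (Sum.inr i)) (Emap n (Sum.inr j)))
      = ∏ i : Fin n, ∏ j : Fin n, if i < j then (Xv i)⁻¹ - (Xv j)⁻¹ else 1 := by
    refine Finset.prod_congr rfl fun i _ => Finset.prod_congr rfl fun j _ => ?_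
    simp only [hf]
    have hc : (Emap n (Sum.inr i) < Emap n (Sum.inr j)) ↔ i < j := by
      simp only [Fin.lt_def, Emap_inr]
      omega
    rw [hzr, hzr]
    simp only [hc]
  rw [hll, hlr, hrl, hrr]
  -- split the middle product into diagonal and off-diagonal
  rw [prod_split_diag (fun i j => Xv i - (Xv j)⁻¹)]
  -- diagonal
  have hdiag : (∏ i : Fin n, (Xv i - (Xv i)⁻¹))
      = (∏ i : Fin n, (Y i - (Y i)⁻¹)) * (∏ i : Fin n, (Y i + (Y i)⁻¹)) := by
    rw [← Finset.prod_mul_distrib]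
    refine Finset.prod_congr rfl fun i _ => ?_
    rw [Xv]
    exact diag_identity (Y i) (Y_ne_zero i)
  -- combine the three ∏∏-ite products with the xpairs
  have hxp : (∏ i : Fin n, ∏ j : Fin n, if i < j then Xv i - Xv j else 1)
      * ((∏ i : Fin n, ∏ j : Fin n, if i < j then (Xv i - (Xv j)⁻¹) * (Xv j - (Xv i)⁻¹) else 1)
      * (∏ i : Fin n, ∏ j : Fin n, if i < j then (Xv i)⁻¹ - (Xv j)⁻¹ else 1))
      = xpairs (fun i : Fin n => Y i ^ 2) * xpairs (fun i : Fin n => -(Xv i)) := by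
    have hxp1 : xpairs (fun i : Fin n => Y i ^ 2)
        = ∏ i : Fin n, ∏ j : Fin n,
            if i < j then Xv i + (Xv i)⁻¹ - Xv j - (Xv j)⁻¹ else 1 := rfl
    have hxp2 : xpairs (fun i : Fin n => -(Xv i))
        = ∏ i : Fin n, ∏ j : Fin n,
            if i < j then -Xv i + (-Xv i)⁻¹ - (-Xv j) - (-Xv j)⁻¹ else 1 := rfl
    have hA : (∏ i : Fin n, ∏ j : Fin n, if i < j then Xv i - Xv j else 1)
        * ((∏ i : Fin n, ∏ j : Fin n, if i < j then (Xv i - (Xv j)⁻¹) * (Xv j - (Xv i)⁻¹) else 1)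
        * (∏ i : Fin n, ∏ j : Fin n, if i < j then (Xv i)⁻¹ - (Xv j)⁻¹ else 1))
        = ∏ i : Fin n, ∏ j : Fin n, if i < j then
            (Xv i - Xv j) * (((Xv i - (Xv j)⁻¹) * (Xv j - (Xv i)⁻¹)) * ((Xv i)⁻¹ - (Xv j)⁻¹))
          else 1 := by
      rw [← Finset.prod_mul_distrib, ← Finset.prod_mul_distrib]
      refine Finset.prod_congr rfl fun i _ => ?_
      rw [← Finset.prod_mul_distrib, ← Finset.prod_mul_distrib]
      refine Finset.prod_congr rfl fun j _ => ?_
      by_cases hij : i < j <;> simp [hij]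
    have hB : (∏ i : Fin n, ∏ j : Fin n, if i < j then Xv i + (Xv i)⁻¹ - Xv j - (Xv j)⁻¹ else 1)
        * (∏ i : Fin n, ∏ j : Fin n, if i < j then -Xv i + (-Xv i)⁻¹ - (-Xv j) - (-Xv j)⁻¹ else 1)
        = ∏ i : Fin n, ∏ j : Fin n, if i < j then
            (Xv i + (Xv i)⁻¹ - Xv j - (Xv j)⁻¹) * (-Xv i + (-Xv i)⁻¹ - (-Xv j) - (-Xv j)⁻¹)
          else 1 := by
      rw [← Finset.prod_mul_distrib]
      refine Finset.prod_congr rfl fun i _ => ?_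
      rw [← Finset.prod_mul_distrib]
      refine Finset.prod_congr rfl fun j _ => ?_
      by_cases hij : i < j <;> simp [hij]
    rw [hxp1, hxp2, hA, hB]
    refine Finset.prod_congr rfl fun i _ => Finset.prod_congr rfl fun j _ => ?_
    by_cases hij : i < j
    · simp only [if_pos hij]
      rw [← pair_identity (Xv i) (Xv j) (Xv_ne_zero i) (Xv_ne_zero j)]
      ring
    · simp only [if_neg hij]
  calc (∏ i : Fin n, ∏ j : Fin n, if i < j then Xv i - Xv j else 1) *
        ((∏ i : Fin n, (Xv i - (Xv i)⁻¹)) *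
          (∏ i : Fin n, ∏ j : Fin n, if i < j then (Xv i - (Xv j)⁻¹) * (Xv j - (Xv i)⁻¹) else 1)) *
        (1 * ∏ i : Fin n, ∏ j : Fin n, if i < j then (Xv i)⁻¹ - (Xv j)⁻¹ else 1)
      = (∏ i : Fin n, (Xv i - (Xv i)⁻¹)) *
        ((∏ i : Fin n, ∏ j : Fin n, if i < j then Xv i - Xv j else 1)
        * ((∏ i : Fin n, ∏ j : Fin n, if i < j then (Xv i - (Xv j)⁻¹) * (Xv j - (Xv i)⁻¹) else 1)
        * (∏ i : Fin n, ∏ j : Fin n, if i < j then (Xv i)⁻¹ - (Xv j)⁻¹ else 1))) := by ring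
    _ = (∏ i : Fin n, (Y i - (Y i)⁻¹)) * (∏ i : Fin n, (Y i + (Y i)⁻¹))
        * xpairs (fun i : Fin n => Y i ^ 2) * xpairs (fun i : Fin n => -(Xv i)) := by
        rw [hdiag, hxp]
        ring

end AllHelpers

lemma final_combine {F : Type*} [Field F] (s dA dB p1 p2 x1 x2 M D : F)
    (hnum : M = s * p2 * dA * dB) (hden : D = p1 * p2 * x1 * x2)
    (h1 : p1 ≠ 0) (h2 : p2 ≠ 0) (h3 : x1 ≠ 0) (h4 : x2 ≠ 0) :
    M / D = s * (dA / (p1 * x1)) * (dB / x2) := by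
  rw [hnum, hden]
  field_simp

set_option maxHeartbeats 4000000 in
/-- s_{((2m)^n,0^n)}(x,x⁻¹) = (-1)^{mn} · so^odd_{(m^n)}(x) · so^odd_{(m^n)}(-x). -/
theorem schur_rect_even_factorization (m n : ℕ) :
    schur (2 * n)
        (fun j => if (j : ℕ) < n then (2 * m : ℤ) else 0)
        (fun i => if h : (i : ℕ) < n then Xv ⟨i, h⟩
                  else (Xv ⟨(i : ℕ) - n, by have := i.isLt; omega⟩)⁻¹)
      = (-1 : K n) ^ (m * n)
        * soOddD n (fun _ => 2 * (m : ℤ)) Y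
        * soOddL n (fun _ => (m : ℤ)) (fun i => -(Xv i)) := by
  classical
  simp only [schur, soOddD, soOddL]
  have hnum : (Matrix.of fun i j : Fin (2*n) =>
      (if h : (i:ℕ) < n then Xv ⟨(i:ℕ), h⟩ else (Xv ⟨(i:ℕ) - n, by have := i.isLt; omega⟩)⁻¹) ^
        ((if (j:ℕ) < n then (2*(m:ℤ)) else 0) + ((2*n : ℕ) : ℤ) - 1 - ((j:ℕ) : ℤ))).det
      = (-1 : K n)^(m*n) * (∏ i : Fin n, (Y i + (Y i)⁻¹))
        * (Matrix.of fun i j : Fin n =>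
            Y i ^ (2*(m:ℤ) + 2*n - 2*(j:ℕ) - 1) - Y i ^ (-(2*(m:ℤ) + 2*n - 2*(j:ℕ) - 1))).det
        * (Matrix.of fun i j : Fin n =>
            ∑ t ∈ Finset.Icc (-((m:ℤ) + n - 1 - (j:ℕ))) ((m:ℤ) + n - 1 - (j:ℕ)), (-Xv i) ^ t).det :=
    numer_fact m n
  have hden : (∏ i : Fin (2*n), ∏ j : Fin (2*n),
        if i < j then
          (if h : (i:ℕ) < n then Xv ⟨(i:ℕ), h⟩ else (Xv ⟨(i:ℕ)-n, by have := i.isLt; omega⟩)⁻¹) -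
          (if h : (j:ℕ) < n then Xv ⟨(j:ℕ), h⟩ else (Xv ⟨(j:ℕ)-n, by have := j.isLt; omega⟩)⁻¹)
        else 1)
      = (∏ i : Fin n, (Y i - (Y i)⁻¹)) * (∏ i : Fin n, (Y i + (Y i)⁻¹))
        * xpairs (fun i : Fin n => Y i ^ 2) * xpairs (fun i : Fin n => -(Xv i)) :=
    denom_fact n
  have h1 : (∏ i : Fin n, (Y i - (Y i)⁻¹)) ≠ 0 :=
    Finset.prod_ne_zero_iff.mpr fun i _ => Y_sub_inv_ne i
  have h2 : (∏ i : Fin n, (Y i + (Y i)⁻¹)) ≠ 0 :=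
    Finset.prod_ne_zero_iff.mpr fun i _ => Y_add_inv_ne i
  have h3 : xpairs (fun i : Fin n => Y i ^ 2) ≠ 0 := by
    simp only [xpairs]
    refine Finset.prod_ne_zero_iff.mpr fun i _ => Finset.prod_ne_zero_iff.mpr fun j _ => ?_
    split_ifs with hij
    · exact u_sub_ne (ne_of_lt hij)
    · exact one_ne_zero
  have h4 : xpairs (fun i : Fin n => -(Xv i)) ≠ 0 := by
    simp only [xpairs]
    refine Finset.prod_ne_zero_iff.mpr fun i _ => Finset.prod_ne_zero_iff.mpr fun j _ => ?_
    split_ifs with hij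
    · intro h
      apply u_sub_ne (ne_of_lt hij)
      rw [inv_neg, inv_neg] at h
      linear_combination -h
    · exact one_ne_zero
  exact final_combine _ _ _ _ _ _ _ _ _ hnum hden h1 h2 h3 h4
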